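/- arXiv:1111.0340 — 4 statements merged into one kernel-verified Lean document; each statement's English description precedes it below -/
import Mathlib

section
/- Let z₀ > −1 and define l(y) := h(z₀ + y) − h(z₀) − h'(z₀)·y for y > −1 − z₀, where h'(z₀) = log(1+z₀). Then for every p ∈ ℝ, sup over y > −1 − z₀ of ( p·y − l(y) ) equals (1 + z₀)·(e^p − p − 1); that is, the Legendre dual of the translated entropy integrand l is l*(p) = (1+z₀)·h*(p). -/
open Real

/-- The relative-entropy integrand `h(z) = (1+z)·log(1+z) − z`. -/
noncomputable def entH (z : ℝ) : ℝ := (1 + z) * Real.log (1 + z) - z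

lemma key_ineq (a u p : ℝ) (ha : 0 < a) (hu : 0 < u) :
    u * (p + 1 - Real.log u + Real.log a) ≤ a * Real.exp p := by
  have h1 : p + Real.log a - Real.log u + 1 ≤ Real.exp (p + Real.log a - Real.log u) :=
    Real.add_one_le_exp _
  have h2 : u * (p + 1 - Real.log u + Real.log a)
      ≤ u * Real.exp (p + Real.log a - Real.log u) := by
    have := mul_le_mul_of_nonneg_left h1 hu.le
    linarith [this]
  calc u * (p + 1 - Real.log u + Real.log a)
      ≤ u * Real.exp (p + Real.log a - Real.log u) := h2
    _ = a * Real.exp p := by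
        rw [show p + Real.log a - Real.log u = (p + Real.log a) + (- Real.log u) by ring,
          Real.exp_add, Real.exp_add, Real.exp_neg, Real.exp_log hu, Real.exp_log ha]
        field_simp

/-- For `z₀ > −1`, the Legendre dual of the translated entropy integrand
`l(y) = h(z₀+y) − h(z₀) − h'(z₀)·y` (for `y > −1−z₀`, with `h'(z₀) = log(1+z₀)`)
is `l*(p) = (1+z₀)·(eᵖ − p − 1) = (1+z₀)·h*(p)`. -/
theorem legendre_dual_of_translated_entropy_integrand (z₀ : ℝ) (hz₀ : -1 < z₀) (p : ℝ) :
    sSup {r : ℝ | ∃ y : ℝ, -1 - z₀ < y ∧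
        r = p * y - (entH (z₀ + y) - entH z₀ - Real.log (1 + z₀) * y)} =
      (1 + z₀) * (Real.exp p - p - 1) := by
  set a : ℝ := 1 + z₀ with ha_def
  have ha : 0 < a := by linarith
  have hub : ∀ r ∈ {r : ℝ | ∃ y : ℝ, -1 - z₀ < y ∧
      r = p * y - (entH (z₀ + y) - entH z₀ - Real.log (1 + z₀) * y)},
      r ≤ a * (Real.exp p - p - 1) := by
    rintro r ⟨y, hy, rfl⟩
    have hu : 0 < a + y := by linarith
    have key := key_ineq a (a + y) p ha hu
    have h3 : (1:ℝ) + (z₀ + y) = a + y := by rw [ha_def]; ring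
    have hrw : (1:ℝ) + z₀ = a := ha_def.symm
    simp only [entH, h3, hrw]
    nlinarith [key]
  have hmem : a * (Real.exp p - p - 1) ∈ {r : ℝ | ∃ y : ℝ, -1 - z₀ < y ∧
      r = p * y - (entH (z₀ + y) - entH z₀ - Real.log (1 + z₀) * y)} := by
    refine ⟨a * Real.exp p - a, by nlinarith [Real.exp_pos p], ?_⟩
    have h1 : 1 + (z₀ + (a * Real.exp p - a)) = a * Real.exp p := by
      rw [ha_def]; ring
    have h2 : Real.log (a * Real.exp p) = Real.log a + p := by
      rw [Real.log_mul ha.ne' (Real.exp_pos p).ne', Real.log_exp]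
    simp only [entH, h1, h2]
    ring
  exact le_antisymm (csSup_le ⟨_, hmem⟩ hub) (le_csSup ⟨_, hub⟩ hmem)
end

section
/- Let n ∈ ℝ^N be a unit vector, α ∈ [0,1], and let F : ℝ^N → [0,∞) be measurable with ∫ F(v)(1+|v|) dv < ∞. Assume F satisfies Maxwell's accommodation condition: F(v) = (1−α) F(v − 2(v·n)n) + α ( √(2π) ∫_{ℝ^N} F(w)(w·n)₊ dw ) M(v) for a.e. v with v·n < 0. Then the normal mass flux vanishes: ∫_{ℝ^N} F(v) (v·n) dv = 0. -/
open MeasureTheory Real Set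
open scoped RealInnerProductSpace

/-- The standard Gaussian density `M(v) = (2π)^{−N/2} exp(−|v|²/2)` on `ℝ^N`. -/
noncomputable def gaussM {N : ℕ} (v : EuclideanSpace ℝ (Fin N)) : ℝ :=
  (2 * π) ^ (-(N : ℝ) / 2) * Real.exp (-‖v‖ ^ 2 / 2)

/- ### Auxiliary one-dimensional Gaussian facts -/

private lemma aux_exp_eq : (fun t : ℝ => Real.exp (-t ^ 2 / 2))
    = fun t : ℝ => Real.exp (-(1/2) * t ^ 2) := by
  funext t; ring_nf

private lemma aux_int_exp : Integrable fun t : ℝ => Real.exp (-t ^ 2 / 2) := by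
  rw [aux_exp_eq]; exact integrable_exp_neg_mul_sq (by norm_num)

private lemma aux_integral_exp : ∫ t : ℝ, Real.exp (-t ^ 2 / 2) = Real.sqrt (2 * π) := by
  rw [aux_exp_eq, integral_gaussian]
  norm_num
  ring

private lemma aux_maxabs (t : ℝ) : |max t 0| ≤ |t| := by
  rcases le_total t 0 with h | h
  · rw [max_eq_right h]; simp
  · rw [max_eq_left h]

private lemma aux_int_xexp : Integrable fun t : ℝ => t * Real.exp (-t ^ 2 / 2) := by
  have heq : (fun t : ℝ => t * Real.exp (-t ^ 2 / 2))
      = fun t : ℝ => t * Real.exp (-(1/2) * t ^ 2) := by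
    funext t; ring_nf
  rw [heq]; exact integrable_mul_exp_neg_mul_sq (by norm_num)

private lemma aux_int_exp_max : Integrable fun t : ℝ => Real.exp (-t ^ 2 / 2) * max t 0 := by
  refine aux_int_xexp.mono ?_ ?_
  · exact ((Real.continuous_exp.comp (by continuity)).mul
      (continuous_id.max continuous_const)).aestronglyMeasurable
  · filter_upwards with t
    rw [Real.norm_eq_abs, Real.norm_eq_abs, abs_mul, abs_mul, mul_comm (|t|)]
    exact mul_le_mul_of_nonneg_left (aux_maxabs t) (abs_nonneg _)

private lemma aux_integral_Ioi : ∫ x in Ioi (0:ℝ), x * Real.exp (-x ^ 2 / 2) = 1 := by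
  have hderiv : ∀ x ∈ Ici (0:ℝ), HasDerivAt (fun y : ℝ => -Real.exp (-y ^ 2 / 2))
      (x * Real.exp (-x ^ 2 / 2)) x := by
    intro x _
    have h1 : HasDerivAt (fun y : ℝ => -y ^ 2 / 2) (-x) x := by
      have h := ((hasDerivAt_pow 2 x).neg.div_const 2)
      refine h.congr_deriv ?_
      push_cast
      ring
    have h2 := (h1.exp).neg
    refine h2.congr_deriv ?_
    ring
  have hint : IntegrableOn (fun x : ℝ => x * Real.exp (-x ^ 2 / 2)) (Ioi 0) :=
    aux_int_xexp.integrableOn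
  have htend : Filter.Tendsto (fun y : ℝ => -Real.exp (-y ^ 2 / 2)) Filter.atTop (nhds 0) := by
    rw [← neg_zero]
    refine Filter.Tendsto.neg ?_
    refine Real.tendsto_exp_atBot.comp ?_
    have h1 : Filter.Tendsto (fun y : ℝ => y ^ 2 / 2) Filter.atTop Filter.atTop :=
      (Filter.tendsto_pow_atTop (by norm_num)).atTop_div_const (by norm_num)
    have := ((Filter.tendsto_neg_atTop_atBot : Filter.Tendsto (fun y : ℝ => -y) Filter.atTop Filter.atBot)).comp h1
    refine this.congr fun y => ?_
    simp [neg_div]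
  have H := integral_Ioi_of_hasDerivAt_of_tendsto' hderiv hint htend
  rw [H]
  norm_num

private lemma aux_integral_exp_max : ∫ t : ℝ, Real.exp (-t ^ 2 / 2) * max t 0 = 1 := by
  have heq : (fun t : ℝ => Real.exp (-t ^ 2 / 2) * max t 0)
      = Set.indicator (Ioi (0:ℝ)) (fun t => t * Real.exp (-t ^ 2 / 2)) := by
    funext t
    by_cases ht : 0 < t
    · rw [Set.indicator_of_mem (Set.mem_Ioi.mpr ht), max_eq_left ht.le]; ring
    · rw [Set.indicator_of_notMem (fun h => ht (Set.mem_Ioi.mp h))]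
      push_neg at ht
      rw [max_eq_right ht, mul_zero]
  rw [heq, integral_indicator measurableSet_Ioi, aux_integral_Ioi]

private lemma aux_c1_sqrt : (2 * π) ^ (-(1:ℝ)/2) * Real.sqrt (2 * π) = 1 := by
  rw [Real.sqrt_eq_rpow, ← Real.rpow_add Real.two_pi_pos]
  norm_num

/- ### The Gaussian half-flux in `ℝ^N` -/

private lemma gauss_flux {N : ℕ} (hN : 0 < N) (u : EuclideanSpace ℝ (Fin N)) (hu : ‖u‖ = 1) :
    Integrable (fun v => gaussM v * max ⟪v, u⟫ 0) ∧
      ∫ v, gaussM v * max ⟪v, u⟫ 0 = (2 * π) ^ (-(1:ℝ)/2) := by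
  set c1 : ℝ := (2 * π) ^ (-(1:ℝ)/2) with hc1
  set i0 : Fin N := ⟨0, hN⟩
  set n' : EuclideanSpace ℝ (Fin N) := EuclideanSpace.single i0 (1:ℝ) with hn'
  have hn'norm : ‖n'‖ = 1 := by rw [hn', EuclideanSpace.norm_single]; norm_num
  set T : EuclideanSpace ℝ (Fin N) ≃ₗᵢ[ℝ] EuclideanSpace ℝ (Fin N) :=
    Submodule.reflection (ℝ ∙ (n' - u))ᗮ with hT
  have hTn' : T n' = u := Submodule.reflection_sub (by rw [hn'norm, hu])
  set f : Fin N → ℝ → ℝ :=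
    fun i t => (c1 * Real.exp (-t ^ 2 / 2)) * (if i = i0 then max t 0 else 1) with hf
  have hfint : ∀ i, Integrable (f i) := by
    intro i
    by_cases hi : i = i0
    · simp only [hf, hi, eq_self_iff_true, if_true]
      have : (fun t : ℝ => (c1 * Real.exp (-t ^ 2 / 2)) * max t 0)
          = fun t : ℝ => c1 * (Real.exp (-t ^ 2 / 2) * max t 0) := by funext t; ring
      rw [this]
      exact aux_int_exp_max.const_mul c1
    · simp only [hf, if_neg hi, mul_one]
      exact aux_int_exp.const_mul c1
  have hc1s : c1 * Real.sqrt (2 * π) = 1 := aux_c1_sqrt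
  have hfval : ∀ i, ∫ t, f i t = if i = i0 then c1 else 1 := by
    intro i
    by_cases hi : i = i0
    · simp only [hf, hi, eq_self_iff_true, if_true]
      have : (fun t : ℝ => (c1 * Real.exp (-t ^ 2 / 2)) * max t 0)
          = fun t : ℝ => c1 * (Real.exp (-t ^ 2 / 2) * max t 0) := by funext t; ring
      rw [this, integral_const_mul, aux_integral_exp_max, mul_one]
    · simp only [hf, if_neg hi, mul_one]
      rw [integral_const_mul, aux_integral_exp, hc1s]
  have key : ∀ x : Fin N → ℝ,
      (∏ i, f i (x i)) = c1 ^ N * Real.exp (-(∑ i, x i ^ 2) / 2) * max (x i0) 0 := by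
    intro x
    simp only [hf]
    rw [Finset.prod_mul_distrib, Finset.prod_mul_distrib, Finset.prod_const,
      Finset.card_univ, Fintype.card_fin, ← Real.exp_sum]
    have h1 : ∑ i, -x i ^ 2 / 2 = -(∑ i, x i ^ 2) / 2 := by
      rw [← Finset.sum_div, ← Finset.sum_neg_distrib]
    have h2 : (∏ i, if i = i0 then max (x i) 0 else 1) = max (x i0) 0 := by
      rw [Finset.prod_ite_eq' Finset.univ i0 (fun i => max (x i) 0)]
      simp
    rw [h1, h2]
  have hgauss : ∀ v : EuclideanSpace ℝ (Fin N),
      gaussM v = c1 ^ N * Real.exp (-(∑ i, v i ^ 2) / 2) := by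
    intro v
    rw [gaussM]
    congr 1
    · rw [hc1, ← Real.rpow_natCast ((2 * π) ^ (-(1:ℝ)/2)) N,
        ← Real.rpow_mul Real.two_pi_pos.le]
      congr 1
      ring
    · congr 1
      have hv : ‖v‖ ^ 2 = ∑ i, v i ^ 2 := by
        rw [EuclideanSpace.norm_eq, Real.sq_sqrt (by positivity)]
        simp [Real.norm_eq_abs, sq_abs]
      rw [hv]
  set e := (MeasurableEquiv.toLp 2 (Fin N → ℝ)).symm with he
  have hmpE : MeasurePreserving e volume volume :=
    EuclideanSpace.volume_preserving_symm_measurableEquiv_toLp (Fin N)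
  have hcomp : ∀ v : EuclideanSpace ℝ (Fin N),
      (∏ i, f i (e v i)) = gaussM v * max ⟪v, n'⟫ 0 := by
    intro v
    have hev : ∀ i, e v i = v i := fun i => rfl
    have hinner : ⟪v, n'⟫ = v i0 := by
      rw [hn']
      have := EuclideanSpace.inner_single_right (𝕜 := ℝ) i0 (1:ℝ) v
      simpa using this
    rw [key, hgauss, hinner]
    simp [hev]
  have hint_pi : Integrable (fun x : Fin N → ℝ => ∏ i, f i (x i)) :=
    Integrable.fintype_prod hfint
  have hint_n' : Integrable (fun v => gaussM v * max ⟪v, n'⟫ 0) := by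
    have h1 : Integrable ((fun x : Fin N → ℝ => ∏ i, f i (x i)) ∘ e) :=
      (hmpE.integrable_comp_emb e.measurableEmbedding).mpr hint_pi
    exact h1.congr (Filter.Eventually.of_forall fun v => hcomp v)
  have hval_n' : ∫ v, gaussM v * max ⟪v, n'⟫ 0 = c1 := by
    have h1 : ∫ v, gaussM v * max ⟪v, n'⟫ 0
        = ∫ v, (fun x : Fin N → ℝ => ∏ i, f i (x i)) (e v) :=
      integral_congr_ae (Filter.Eventually.of_forall fun v => (hcomp v).symm)
    rw [h1, hmpE.integral_comp' (fun x : Fin N → ℝ => ∏ i, f i (x i)),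
      integral_fintype_prod_volume_eq_prod (ι := Fin N) f]
    simp only [hfval]
    rw [Finset.prod_ite_eq' Finset.univ i0 (fun _ => c1)]
    simp
  have hmpT : MeasurePreserving T volume volume := T.measurePreserving
  have hembT : MeasurableEmbedding T := T.toHomeomorph.toMeasurableEquiv.measurableEmbedding
  have hTcomp : ∀ w, gaussM (T w) * max ⟪T w, u⟫ 0 = gaussM w * max ⟪w, n'⟫ 0 := by
    intro w
    have h1 : gaussM (T w) = gaussM w := by rw [gaussM, gaussM, T.norm_map]
    have h2 : ⟪T w, u⟫ = ⟪w, n'⟫ := by rw [← hTn', LinearIsometryEquiv.inner_map_map]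
    rw [h1, h2]
  constructor
  · have h1 : Integrable ((fun v => gaussM v * max ⟪v, u⟫ 0) ∘ T) :=
      hint_n'.congr (Filter.Eventually.of_forall fun w => (hTcomp w).symm)
    exact (hmpT.integrable_comp_emb hembT).mp h1
  · have h1 := hmpT.integral_comp hembT (fun v => gaussM v * max ⟪v, u⟫ 0)
    rw [← h1]
    rw [show (fun w => gaussM (T w) * max ⟪T w, u⟫ 0)
        = fun w => gaussM w * max ⟪w, n'⟫ 0 from funext hTcomp]
    exact hval_n'

/-- If a nonnegative integrable (against `1+|v|`) distribution `F` satisfies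
Maxwell's accommodation condition at a boundary point with outward unit normal `n`
and accommodation parameter `α ∈ [0,1]`, then the normal mass flux vanishes:
`∫ F(v)(v·n) dv = 0`. -/
theorem accommodation_implies_zero_normal_mass_flux {N : ℕ}
    (n : EuclideanSpace ℝ (Fin N)) (hn : ‖n‖ = 1)
    (α : ℝ) (hα : α ∈ Set.Icc (0 : ℝ) 1)
    (F : EuclideanSpace ℝ (Fin N) → ℝ) (hFmeas : Measurable F)
    (hFnonneg : ∀ v, 0 ≤ F v)
    (hFint : Integrable fun v => F v * (1 + ‖v‖))
    (hacc : ∀ᵐ v : EuclideanSpace ℝ (Fin N), ⟪v, n⟫ < 0 →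
      F v = (1 - α) * F (v - (2 * ⟪v, n⟫) • n)
        + α * (Real.sqrt (2 * π) * ∫ w, F w * max ⟪w, n⟫ 0) * gaussM v) :
    (∫ v, F v * ⟪v, n⟫) = 0 := by
  rcases Nat.eq_zero_or_pos N with hN0 | hN
  · exfalso
    subst hN0
    have hzero : n = 0 := Subsingleton.elim n 0
    rw [hzero, norm_zero] at hn
    norm_num at hn
  have hinner : Continuous fun v : EuclideanSpace ℝ (Fin N) => ⟪v, n⟫ :=
    continuous_id.inner continuous_const
  have habs : ∀ v : EuclideanSpace ℝ (Fin N), |⟪v, n⟫| ≤ ‖v‖ := by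
    intro v
    calc |⟪v, n⟫| ≤ ‖v‖ * ‖n‖ := abs_real_inner_le_norm v n
    _ = ‖v‖ := by rw [hn, mul_one]
  have hFnrm : Integrable (fun v : EuclideanSpace ℝ (Fin N) => F v * ‖v‖) := by
    refine hFint.mono ((hFmeas.mul measurable_norm).aestronglyMeasurable) ?_
    filter_upwards with v
    rw [Real.norm_eq_abs, Real.norm_eq_abs, abs_mul, abs_mul,
      abs_of_nonneg (hFnonneg v), abs_of_nonneg (norm_nonneg v),
      abs_of_nonneg (by positivity : (0:ℝ) ≤ 1 + ‖v‖)]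
    nlinarith [hFnonneg v, norm_nonneg v]
  have key_int : ∀ φ : EuclideanSpace ℝ (Fin N) → ℝ, Measurable φ → (∀ v, |φ v| ≤ ‖v‖) →
      Integrable (fun v => F v * φ v) := by
    intro φ hφ hb
    refine hFnrm.mono ((hFmeas.mul hφ).aestronglyMeasurable) ?_
    filter_upwards with v
    rw [Real.norm_eq_abs, Real.norm_eq_abs, abs_mul, abs_mul,
      abs_of_nonneg (hFnonneg v), abs_of_nonneg (norm_nonneg v)]
    exact mul_le_mul_of_nonneg_left (hb v) (hFnonneg v)
  have hIp : Integrable (fun v => F v * max ⟪v, n⟫ 0) :=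
    key_int _ (hinner.max continuous_const).measurable
      (fun v => le_trans (aux_maxabs _) (habs v))
  have hIm : Integrable (fun v => F v * max (-⟪v, n⟫) 0) :=
    key_int _ ((hinner.neg).max continuous_const).measurable
      (fun v => le_trans (aux_maxabs _) (by rw [abs_neg]; exact habs v))
  set Λ : ℝ := ∫ w, F w * max ⟪w, n⟫ 0 with hΛ
  -- the reflection
  set T : EuclideanSpace ℝ (Fin N) ≃ₗᵢ[ℝ] EuclideanSpace ℝ (Fin N) :=
    Submodule.reflection (ℝ ∙ n)ᗮ with hT
  have hTapply : ∀ v, T v = v - (2 * ⟪v, n⟫) • n := by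
    intro v
    have hproj := Submodule.starProjection_unit_singleton ℝ hn v
    have h0 : (T v : EuclideanSpace ℝ (Fin N))
        = 2 • ((ℝ ∙ n)ᗮ.starProjection v) - v :=
      Submodule.reflection_apply v
    rw [Submodule.starProjection_orthogonal_val, hproj, real_inner_comm v n] at h0
    rw [h0, two_smul]
    module
  have hTinner : ∀ v, ⟪T v, n⟫ = -⟪v, n⟫ := by
    intro v
    have hnn : ⟪n, n⟫ = 1 := by
      rw [real_inner_self_eq_norm_sq, hn]; norm_num
    rw [hTapply, inner_sub_left, real_inner_smul_left, hnn]
    ring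
  have hmpT : MeasurePreserving T volume volume := T.measurePreserving
  have hembT : MeasurableEmbedding T := T.toHomeomorph.toMeasurableEquiv.measurableEmbedding
  have hJ1int : Integrable (fun v => F (T v) * max (-⟪v, n⟫) 0) := by
    have h1 : Integrable ((fun w => F w * max ⟪w, n⟫ 0) ∘ T) :=
      (hmpT.integrable_comp_emb hembT).mpr hIp
    refine h1.congr (Filter.Eventually.of_forall fun v => ?_)
    simp only [Function.comp_apply]
    rw [hTinner]
  have hJ1val : ∫ v, F (T v) * max (-⟪v, n⟫) 0 = Λ := by
    have h1 := hmpT.integral_comp hembT (fun w => F w * max ⟪w, n⟫ 0)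
    rw [hΛ, ← h1]
    exact integral_congr_ae (Filter.Eventually.of_forall fun v => by simp only [hTinner])
  -- the Gaussian piece
  obtain ⟨hGint0, hGval0⟩ := gauss_flux hN (-n) (by rw [norm_neg, hn])
  have hGint : Integrable (fun v => gaussM v * max (-⟪v, n⟫) 0) := by
    simpa [inner_neg_right] using hGint0
  have hGval : ∫ v, gaussM v * max (-⟪v, n⟫) 0 = (2 * π) ^ (-(1:ℝ)/2) := by
    have := hGval0
    simpa [inner_neg_right] using this
  -- the a.e. identity on the incoming half space
  have hkey : (fun v => F v * max (-⟪v, n⟫) 0) =ᵐ[volume]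
      (fun v => (1 - α) * (F (T v) * max (-⟪v, n⟫) 0)
        + (α * (Real.sqrt (2 * π) * Λ)) * (gaussM v * max (-⟪v, n⟫) 0)) := by
    filter_upwards [hacc] with v hv
    rcases lt_or_ge ⟪v, n⟫ 0 with h | h
    · rw [hv h, ← hTapply]
      ring
    · rw [max_eq_right (neg_nonpos.mpr h)]
      ring
  have hIm_val : ∫ v, F v * max (-⟪v, n⟫) 0
      = (1 - α) * Λ + (α * (Real.sqrt (2 * π) * Λ)) * ((2 * π) ^ (-(1:ℝ)/2)) := by
    rw [integral_congr_ae hkey,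
      integral_add (hJ1int.const_mul _) (hGint.const_mul _),
      integral_const_mul, integral_const_mul, hJ1val, hGval]
  -- assemble
  have hsplit : (fun v : EuclideanSpace ℝ (Fin N) => F v * ⟪v, n⟫)
      = fun v => F v * max ⟪v, n⟫ 0 - F v * max (-⟪v, n⟫) 0 := by
    funext v
    rw [← mul_sub, max_zero_sub_max_neg_zero_eq_self]
  rw [hsplit, integral_sub hIp hIm, ← hΛ, hIm_val]
  have hs : (α * (Real.sqrt (2 * π) * Λ)) * ((2 * π) ^ (-(1:ℝ)/2)) = α * Λ := by
    have h := aux_c1_sqrt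
    calc (α * (Real.sqrt (2 * π) * Λ)) * ((2 * π) ^ (-(1:ℝ)/2))
        = α * Λ * ((2 * π) ^ (-(1:ℝ)/2) * Real.sqrt (2 * π)) := by ring
    _ = α * Λ := by rw [h, mul_one]
  rw [hs]
  ring
end

section
/- Let n ∈ ℝ^N be a unit vector, α ∈ [0,1], u ∈ ℝ^N with u·n = 0, and let F : ℝ^N → [0,∞) be measurable with ∫ F(v)(1+|v|²) dv < ∞. Assume F satisfies Maxwell's accommodation condition: F(v) = (1−α) F(v − 2(v·n)n) + α ( √(2π) ∫_{ℝ^N} F(w)(w·n)₊ dw ) M(v) for a.e. v with v·n < 0. Then the tangential momentum flux reduces to α times its outgoing part: ∫_{ℝ^N} (u·v)(v·n) F(v) dv = α ∫_{ℝ^N} (u·v)(v·n)₊ F(v) dv. -/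
open MeasureTheory Real Set
open scoped RealInnerProductSpace

lemma refl_apply_unit {N : ℕ} (a : EuclideanSpace ℝ (Fin N)) (ha : ‖a‖ = 1)
    (v : EuclideanSpace ℝ (Fin N)) :
    Submodule.reflection (ℝ ∙ a)ᗮ v = v - (2 * ⟪v, a⟫) • a := by
  rw [Submodule.reflection_orthogonal_apply, Submodule.reflection_singleton_apply, ha]
  simp only [one_pow, div_one, RCLike.ofReal_real_eq_id, id_eq]
  rw [real_inner_comm a v, two_smul, two_mul, add_smul]
  abel

/-- If a nonnegative distribution `F` with `∫ F(v)(1+|v|²) dv < ∞` satisfies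
Maxwell's accommodation condition at a boundary point with outward unit normal `n`
and accommodation parameter `α ∈ [0,1]`, and `u` is tangential (`u·n = 0`), then the
tangential momentum flux reduces to `α` times its outgoing part:
`∫ (u·v)(v·n) F(v) dv = α ∫ (u·v)(v·n)₊ F(v) dv`. -/
theorem accommodation_tangential_momentum_flux {N : ℕ}
    (n : EuclideanSpace ℝ (Fin N)) (hn : ‖n‖ = 1)
    (α : ℝ) (hα : α ∈ Set.Icc (0 : ℝ) 1)
    (u : EuclideanSpace ℝ (Fin N)) (hu : ⟪u, n⟫ = 0)
    (F : EuclideanSpace ℝ (Fin N) → ℝ) (hFmeas : Measurable F)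
    (hFnonneg : ∀ v, 0 ≤ F v)
    (hFint : Integrable fun v => F v * (1 + ‖v‖ ^ 2))
    (hacc : ∀ᵐ v : EuclideanSpace ℝ (Fin N), ⟪v, n⟫ < 0 →
      F v = (1 - α) * F (v - (2 * ⟪v, n⟫) • n)
        + α * (Real.sqrt (2 * π) * ∫ w, F w * max ⟪w, n⟫ 0) * gaussM v) :
    (∫ v, ⟪u, v⟫ * ⟪v, n⟫ * F v) = α * ∫ v, ⟪u, v⟫ * max ⟪v, n⟫ 0 * F v := by
  by_cases hu0 : u = 0
  · simp [hu0]
  -- notation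
  set f : EuclideanSpace ℝ (Fin N) → ℝ := fun v => ⟪u, v⟫ * ⟪v, n⟫ * F v with hf
  set f2 : EuclideanSpace ℝ (Fin N) → ℝ := fun v => ⟪u, v⟫ * max ⟪v, n⟫ 0 * F v with hf2
  set h : EuclideanSpace ℝ (Fin N) → ℝ :=
    fun v => ⟪u, v⟫ * ⟪v, n⟫ * F (v - (2 * ⟪v, n⟫) • n) with hh
  set q : EuclideanSpace ℝ (Fin N) → ℝ := fun v => ⟪u, v⟫ * ⟪v, n⟫ * gaussM v with hq
  set β : ℝ := α * (Real.sqrt (2 * π) * ∫ w, F w * max ⟪w, n⟫ 0) with hβ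
  set Sneg : Set (EuclideanSpace ℝ (Fin N)) := {v | ⟪v, n⟫ < 0} with hSneg
  set Spos : Set (EuclideanSpace ℝ (Fin N)) := {v | 0 < ⟪v, n⟫} with hSpos
  have hinner_cont : Continuous fun v : EuclideanSpace ℝ (Fin N) => ⟪v, n⟫ :=
    continuous_id.inner continuous_const
  have hinner_cont' : Continuous fun v : EuclideanSpace ℝ (Fin N) => ⟪u, v⟫ :=
    continuous_const.inner continuous_id
  have hNegMeas : MeasurableSet Sneg := measurableSet_lt hinner_cont.measurable measurable_const
  have hPosMeas : MeasurableSet Spos := measurableSet_lt measurable_const hinner_cont.measurable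
  -- the reflections
  set R : EuclideanSpace ℝ (Fin N) ≃ₗᵢ[ℝ] EuclideanSpace ℝ (Fin N) := Submodule.reflection (ℝ ∙ n)ᗮ with hR
  have hRap : ∀ v, R v = v - (2 * ⟪v, n⟫) • n := refl_apply_unit n hn
  set w : EuclideanSpace ℝ (Fin N) := ‖u‖⁻¹ • u with hw
  have hwu : ‖w‖ = 1 := norm_smul_inv_norm hu0
  set S : EuclideanSpace ℝ (Fin N) ≃ₗᵢ[ℝ] EuclideanSpace ℝ (Fin N) := Submodule.reflection (ℝ ∙ w)ᗮ with hS
  have hSap : ∀ v, S v = v - (2 * ⟪v, w⟫) • w := refl_apply_unit w hwu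
  have hnn : ⟪n, n⟫ = (1:ℝ) := by
    rw [real_inner_self_eq_norm_mul_norm, hn]; norm_num
  have hRn : ∀ v, ⟪R v, n⟫ = -⟪v, n⟫ := by
    intro v
    rw [hRap v, inner_sub_left, real_inner_smul_left, hnn]
    ring
  have hRu : ∀ v, ⟪u, R v⟫ = ⟪u, v⟫ := by
    intro v
    rw [hRap v, inner_sub_right, real_inner_smul_right, hu]
    ring
  have hnu : ‖u‖ ≠ 0 := norm_ne_zero_iff.2 hu0
  have hSn : ∀ v, ⟪S v, n⟫ = ⟪v, n⟫ := by
    intro v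
    rw [hSap v, inner_sub_left, real_inner_smul_left, hw, real_inner_smul_left, hu]
    ring
  have hSu : ∀ v, ⟪u, S v⟫ = -⟪u, v⟫ := by
    intro v
    rw [hSap v, inner_sub_right]
    simp only [hw, real_inner_smul_right, real_inner_smul_left]
    rw [real_inner_comm v u, real_inner_self_eq_norm_mul_norm]
    field_simp
    ring
  have hSg : ∀ v, gaussM (S v) = gaussM v := by
    intro v
    unfold gaussM
    rw [S.norm_map]
  -- null hyperplane
  have hZ : volume {v : EuclideanSpace ℝ (Fin N) | ⟪v, n⟫ = 0} = 0 := by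
    have hset : {v : EuclideanSpace ℝ (Fin N) | ⟪v, n⟫ = 0}
        = ((ℝ ∙ n)ᗮ : Submodule ℝ (EuclideanSpace ℝ (Fin N))) := by
      ext v
      simp [Submodule.mem_orthogonal_singleton_iff_inner_left]
    rw [hset]
    refine Measure.addHaar_submodule _ _ ?_
    intro htop
    have hmem : n ∈ ((ℝ ∙ n)ᗮ : Submodule ℝ (EuclideanSpace ℝ (Fin N))) := by
      rw [htop]; exact Submodule.mem_top
    have := Submodule.mem_orthogonal_singleton_iff_inner_left.1 hmem
    rw [hnn] at this
    norm_num at this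
  have hUnion : (univ : Set (EuclideanSpace ℝ (Fin N))) =ᵐ[volume] ((Spos ∪ Sneg : Set (EuclideanSpace ℝ (Fin N)))) := by
    rw [MeasureTheory.ae_eq_set]
    constructor
    · refine measure_mono_null ?_ hZ
      intro v hv
      simp only [mem_diff, mem_univ, true_and, Spos, Sneg, mem_union, mem_setOf_eq, not_or,
        not_lt] at hv
      simp only [mem_setOf_eq]
      linarith [hv.1, hv.2]
    · simp
  have hdisj : Disjoint Spos Sneg := by
    rw [Set.disjoint_left]
    intro v hv hv'
    simp only [Spos, Sneg, mem_setOf_eq] at hv hv'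
    linarith
  -- integrability
  have hmf : AEStronglyMeasurable f volume :=
    ((hinner_cont'.measurable.mul hinner_cont.measurable).mul hFmeas).aestronglyMeasurable
  have hmf2 : AEStronglyMeasurable f2 volume :=
    ((hinner_cont'.measurable.mul
      (hinner_cont.max continuous_const).measurable).mul hFmeas).aestronglyMeasurable
  have hboundaux : ∀ v : EuclideanSpace ℝ (Fin N), ∀ x : ℝ, |x| ≤ ‖v‖ →
      |⟪u, v⟫ * x * F v| ≤ ‖u‖ * (F v * (1 + ‖v‖ ^ 2)) := by
    intro v x hx
    have h1 : |⟪u, v⟫| ≤ ‖u‖ * ‖v‖ := abs_real_inner_le_norm u v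
    have h3 : |⟪u, v⟫ * x| ≤ ‖u‖ * ‖v‖ * ‖v‖ := by
      rw [abs_mul]
      exact mul_le_mul h1 hx (abs_nonneg _) (by positivity)
    rw [abs_mul, abs_of_nonneg (hFnonneg v)]
    have h4 : |⟪u, v⟫ * x| * F v ≤ ‖u‖ * ‖v‖ * ‖v‖ * F v :=
      mul_le_mul_of_nonneg_right h3 (hFnonneg v)
    nlinarith [hFnonneg v, norm_nonneg u, norm_nonneg v, sq_nonneg (‖v‖),
      mul_nonneg (norm_nonneg u) (hFnonneg v)]
  have hxn : ∀ v : EuclideanSpace ℝ (Fin N), |⟪v, n⟫| ≤ ‖v‖ := by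
    intro v
    have := abs_real_inner_le_norm v n
    rwa [hn, mul_one] at this
  have hint_f : Integrable f := by
    refine (hFint.const_mul ‖u‖).mono' hmf (ae_of_all _ fun v => ?_)
    exact hboundaux v _ (hxn v)
  have hint_f2 : Integrable f2 := by
    refine (hFint.const_mul ‖u‖).mono' hmf2 (ae_of_all _ fun v => ?_)
    refine hboundaux v _ ?_
    rw [abs_of_nonneg (le_max_right _ _)]
    exact le_trans (max_le (le_abs_self _) (abs_nonneg _)) (hxn v)
  have hint_h : Integrable h := by
    have hcomp : (fun v => -(f v)) ∘ (R : EuclideanSpace ℝ (Fin N) → EuclideanSpace ℝ (Fin N))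
        = h := by
      funext v
      simp only [Function.comp_apply, hf, hh]
      rw [hRu v, hRn v, hRap v]
      ring
    have := (integrable_comp R (fun v => -(f v))).2 hint_f.neg
    rwa [hcomp] at this
  -- the three set-integral identities
  have hsplit : ∀ g : EuclideanSpace ℝ (Fin N) → ℝ, Integrable g →
      ∫ v, g v = (∫ v in Spos, g v) + ∫ v in Sneg, g v := by
    intro g hg
    rw [← setIntegral_univ, setIntegral_congr_set hUnion,
      setIntegral_union hdisj hNegMeas hg.integrableOn hg.integrableOn]
  have hnegh : ∫ v in Sneg, h v = -∫ v in Spos, f v := by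
    have hind : ∀ v, Spos.indicator (fun x => -(f x)) (R v) = Sneg.indicator h v := by
      intro v
      have hmem : R v ∈ Spos ↔ v ∈ Sneg := by
        simp only [Spos, Sneg, mem_setOf_eq, hRn v]
        constructor <;> intro hx <;> linarith
      by_cases hv : v ∈ Sneg
      · rw [Set.indicator_of_mem (hmem.2 hv), Set.indicator_of_mem hv]
        simp only [hf, hh]
        rw [hRu v, hRn v, hRap v]
        ring
      · rw [Set.indicator_of_notMem (fun hc => hv (hmem.1 hc)), Set.indicator_of_notMem hv]
    calc ∫ v in Sneg, h v = ∫ v, Sneg.indicator h v := (integral_indicator hNegMeas).symm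
      _ = ∫ v, Spos.indicator (fun x => -(f x)) (R v) := by
          congr 1; funext v; rw [hind v]
      _ = ∫ v, Spos.indicator (fun x => -(f x)) v := integral_comp R _
      _ = ∫ v in Spos, -(f v) := integral_indicator hPosMeas
      _ = -∫ v in Spos, f v := integral_neg f
  have hnegq : ∫ v in Sneg, q v = 0 := by
    have hind : ∀ v, Sneg.indicator q (S v) = -(Sneg.indicator q v) := by
      intro v
      have hmem : S v ∈ Sneg ↔ v ∈ Sneg := by
        simp only [Sneg, mem_setOf_eq, hSn v]
      by_cases hv : v ∈ Sneg
      · rw [Set.indicator_of_mem (hmem.2 hv), Set.indicator_of_mem hv]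
        simp only [hq]
        rw [hSu v, hSn v, hSg v]
        ring
      · rw [Set.indicator_of_notMem (fun hc => hv (hmem.1 hc)), Set.indicator_of_notMem hv,
          neg_zero]
    have h1 : ∫ v in Sneg, q v = ∫ v, Sneg.indicator q v := (integral_indicator hNegMeas).symm
    have h2 : ∫ v, Sneg.indicator q v = -∫ v, Sneg.indicator q v := by
      conv_lhs => rw [← integral_comp S (Sneg.indicator q)]
      calc ∫ v, Sneg.indicator q (S v) = ∫ v, -(Sneg.indicator q v) := by
            congr 1; funext v; rw [hind v]
        _ = -∫ v, Sneg.indicator q v := integral_neg _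
    rw [h1]
    linarith
  -- the accommodation identity on Sneg
  have haccNeg : ∀ᵐ v ∂(volume.restrict Sneg), f v = (1 - α) * h v + β * q v := by
    rw [ae_restrict_iff' hNegMeas]
    filter_upwards [hacc] with v hv hvneg
    have := hv hvneg
    simp only [hf, hh, hq, hβ]
    rw [this]
    ring
  have hsum_int : IntegrableOn (fun v => (1 - α) * h v + β * q v) Sneg :=
    hint_f.integrableOn.congr_fun_ae haccNeg
  have hh_int : IntegrableOn (fun v => (1 - α) * h v) Sneg :=
    (hint_h.const_mul (1 - α)).integrableOn
  have hbq_int : IntegrableOn (fun v => β * q v) Sneg := by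
    have h0 := hsum_int.sub hh_int
    refine h0.congr (ae_of_all _ fun v => ?_)
    simp only [Pi.sub_apply]
    ring
  have hnegf : ∫ v in Sneg, f v = (1 - α) * (-∫ v in Spos, f v) := by
    calc ∫ v in Sneg, f v = ∫ v in Sneg, ((1 - α) * h v + β * q v) :=
          integral_congr_ae haccNeg
      _ = (∫ v in Sneg, (1 - α) * h v) + ∫ v in Sneg, β * q v :=
          integral_add hh_int hbq_int
      _ = (1 - α) * (∫ v in Sneg, h v) + β * ∫ v in Sneg, q v := by
          rw [integral_const_mul, integral_const_mul]
      _ = (1 - α) * (-∫ v in Spos, f v) := by rw [hnegh, hnegq]; ring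
  -- compute the RHS integral
  have hposf2 : ∫ v in Spos, f2 v = ∫ v in Spos, f v := by
    refine setIntegral_congr_fun hPosMeas fun v hv => ?_
    simp only [hf2, hf]
    rw [max_eq_left (le_of_lt hv)]
  have hnegf2 : ∫ v in Sneg, f2 v = 0 := by
    rw [show (0:ℝ) = ∫ (_ : EuclideanSpace ℝ (Fin N)) in Sneg, (0:ℝ) by simp]
    refine setIntegral_congr_fun hNegMeas fun v hv => ?_
    simp only [hf2]
    rw [max_eq_right (le_of_lt hv)]
    ring
  rw [hsplit f hint_f, hsplit f2 hint_f2, hnegf, hposf2, hnegf2]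
  ring
end

section
/- Let n ∈ ℝ^N be a unit vector, u ∈ ℝ^N with u·n = 0, and 0 < ε ≤ 1. Let g : ℝ^N → ℝ be measurable with 1 + ε g ≥ 0 a.e., and assume that g, h(εg), and e^{2|u||v|}(1+εg) are integrable against (v·n)₊ M(v) dv. Then ∫_{ℝ^N} (u·v)(v·n)₊ g(v) M(v) dv ≤ (1/(2ε²)) · (1/√(2π)) ( Λ_n(h(εg)) − h(ε Λ_n(g)) ) + C(u) · Λ_n(1 + εg), where C(u) := ½ ∫_{ℝ^N} ( e^{2|u||v|} − 2|u||v| − 1 ) (v·n)₊ M(v) dv. -/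
open MeasureTheory Real Set
open scoped RealInnerProductSpace

/-- The boundary average `Λ_n(φ) = √(2π) ∫ φ(v)(v·n)₊ M(v) dv`. -/
noncomputable def Lam {N : ℕ} (n : EuclideanSpace ℝ (Fin N))
    (φ : EuclideanSpace ℝ (Fin N) → ℝ) : ℝ :=
  Real.sqrt (2 * π) * ∫ v, φ v * max ⟪v, n⟫ 0 * gaussM v

lemma psi_nonneg (x : ℝ) : 0 ≤ Real.exp x - x - 1 := by
  nlinarith [Real.add_one_le_exp x]

lemma psi_mono {a b : ℝ} (ha : 0 ≤ a) (hab : a ≤ b) :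
    Real.exp a - a - 1 ≤ Real.exp b - b - 1 := by
  have h : Real.exp b = Real.exp a * Real.exp (b - a) := by
    rw [← Real.exp_add]; ring_nf
  nlinarith [Real.add_one_le_exp (b - a), Real.one_le_exp ha, (Real.exp_pos a).le]

lemma psi_abs (x : ℝ) : Real.exp x - x - 1 ≤ Real.exp |x| - |x| - 1 := by
  rcases le_or_gt 0 x with h | h
  · rw [abs_of_nonneg h]
  · rw [abs_of_neg h]
    have h1 : -x ≤ Real.sinh (-x) := Real.self_le_sinh_iff.mpr (by linarith)
    have h2 : Real.sinh (-x) = (Real.exp (-x) - Real.exp x) / 2 := by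
      rw [Real.sinh_eq]; simp
    linarith [h1, h2.le, h2.ge]

lemma exp_conv {ε : ℝ} (h0 : 0 ≤ ε) (h1 : ε ≤ 1) (x : ℝ) :
    Real.exp (ε * x) ≤ 1 - ε + ε * Real.exp x := by
  have := convexOn_exp.2 (Set.mem_univ (0:ℝ)) (Set.mem_univ x)
    (by linarith : (0:ℝ) ≤ 1 - ε) h0 (by ring)
  simpa using this

lemma psi_scale {ε s : ℝ} (h0 : 0 ≤ ε) (h1 : ε ≤ 1) (hs : 0 ≤ s) :
    Real.exp (ε * s) - ε * s - 1 ≤ ε ^ 2 * (Real.exp s - s - 1) := by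
  set f : ℝ → ℝ := fun x => ε ^ 2 * (Real.exp x - x - 1) - (Real.exp (ε * x) - ε * x - 1)
    with hf
  have hderiv : ∀ x : ℝ, HasDerivAt f
      (ε ^ 2 * (Real.exp x - 1) - (Real.exp (ε * x) * ε - ε)) x := by
    intro x
    have h1 : HasDerivAt (fun x : ℝ => Real.exp (ε * x)) (Real.exp (ε * x) * ε) x := by
      have h := (Real.hasDerivAt_exp (ε * x)).comp x ((hasDerivAt_id x).const_mul ε)
      rw [mul_one] at h; exact h
    have h2 : HasDerivAt (fun x : ℝ => Real.exp x - x - 1) (Real.exp x - 1) x := by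
      simpa using ((Real.hasDerivAt_exp x).sub (hasDerivAt_id x)).sub_const 1
    have h3 : HasDerivAt (fun x : ℝ => Real.exp (ε * x) - ε * x - 1)
        (Real.exp (ε * x) * ε - ε) x :=
      (h1.sub (by simpa using (hasDerivAt_id x).const_mul ε)).sub_const 1
    exact (h2.const_mul (ε ^ 2)).sub h3
  have hdiff : Differentiable ℝ f := fun x => (hderiv x).differentiableAt
  have hmono : MonotoneOn f (Set.Ici 0) := by
    apply monotoneOn_of_deriv_nonneg (convex_Ici 0) hdiff.continuous.continuousOn
      (fun x _ => (hdiff x).differentiableWithinAt)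
    intro x hx
    rw [(hderiv x).deriv]
    have hc := exp_conv h0 h1 x
    nlinarith [mul_nonneg h0 (sub_nonneg.mpr hc)]
  have := hmono (Set.self_mem_Ici) (Set.mem_Ici.mpr hs) hs
  simp only [hf, mul_zero, Real.exp_zero] at this
  nlinarith [this]

lemma young {a t : ℝ} (ha : 0 ≤ a) (ht : 0 < t) (c : ℝ) :
    a * c ≤ a * Real.log a - a * Real.log t - a + t * Real.exp c := by
  rcases eq_or_lt_of_le ha with h | h
  · rw [← h]; simp; positivity
  · have key := Real.add_one_le_exp (c + Real.log t - Real.log a)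
    have he : Real.exp (c + Real.log t - Real.log a) = Real.exp c * t / a := by
      rw [Real.exp_sub, Real.exp_add, Real.exp_log ht, Real.exp_log h]
    rw [he] at key
    have h2 := mul_le_mul_of_nonneg_left key h.le
    have h3 : a * (Real.exp c * t / a) = t * Real.exp c := by
      field_simp
    nlinarith [h2, h3]

lemma gaussM_pos {N : ℕ} (v : EuclideanSpace ℝ (Fin N)) : 0 < gaussM v := by
  unfold gaussM; positivity

lemma gaussM_cont {N : ℕ} : Continuous (gaussM (N := N)) := by
  unfold gaussM
  exact continuous_const.mul (Real.continuous_exp.comp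
    (((continuous_norm.pow 2).neg).div_const 2))

lemma integrable_exp_gauss {N : ℕ} (c : ℝ) :
    Integrable (fun v : EuclideanSpace ℝ (Fin N) =>
      Real.exp (c * ‖v‖) * Real.exp (-‖v‖ ^ 2 / 2)) := by
  have base : Integrable (fun v : EuclideanSpace ℝ (Fin N) =>
      Real.exp (-(1/4 : ℝ) * ‖v‖ ^ 2)) := by
    have h := (GaussianFourier.integrable_cexp_neg_mul_sq_norm_add
        (V := EuclideanSpace ℝ (Fin N)) (b := (1/4 : ℂ)) (by norm_num) 0 0).norm
    simpa [Complex.norm_exp, ← Complex.ofReal_pow] using h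
  apply Integrable.mono' (base.const_mul (Real.exp (c ^ 2)))
  · exact ((Real.continuous_exp.comp (continuous_const.mul continuous_norm)).mul
      (Real.continuous_exp.comp ((continuous_norm.pow 2).neg.div_const 2))).aestronglyMeasurable
  · filter_upwards with v
    rw [Real.norm_of_nonneg (by positivity), ← Real.exp_add, ← Real.exp_add]
    apply Real.exp_le_exp.mpr
    nlinarith [sq_nonneg (‖v‖ / 2 - c), sq_nonneg ‖v‖]

lemma integrable_dom {N : ℕ} (n : EuclideanSpace ℝ (Fin N)) (hn : ‖n‖ = 1) (c : ℝ) :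
    Integrable (fun v : EuclideanSpace ℝ (Fin N) =>
      Real.exp (c * ‖v‖) * (max ⟪v, n⟫ 0 * gaussM v)) := by
  apply Integrable.mono' (((integrable_exp_gauss (c + 1)).const_mul
    ((2 * π) ^ (-(N : ℝ) / 2))))
  · apply Continuous.aestronglyMeasurable
    exact (Real.continuous_exp.comp (continuous_const.mul continuous_norm)).mul
      (((continuous_id.inner continuous_const).max continuous_const).mul gaussM_cont)
  · filter_upwards with v
    have h1 : max ⟪v, n⟫ 0 ≤ ‖v‖ := by
      apply max_le _ (norm_nonneg v)
      calc ⟪v, n⟫ ≤ |⟪v, n⟫| := le_abs_self _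
        _ ≤ ‖v‖ * ‖n‖ := abs_real_inner_le_norm v n
        _ = ‖v‖ := by rw [hn, mul_one]
    have h2 : ‖v‖ ≤ Real.exp ‖v‖ := by nlinarith [Real.add_one_le_exp ‖v‖]
    have h3 : (0:ℝ) ≤ max ⟪v, n⟫ 0 := le_max_right _ _
    have hgM := (gaussM_pos v).le
    rw [Real.norm_of_nonneg (by positivity)]
    unfold gaussM
    have h4 : Real.exp (c * ‖v‖) * max ⟪v, n⟫ 0 ≤ Real.exp ((c + 1) * ‖v‖) := by
      have h5 : Real.exp (c * ‖v‖) * max ⟪v, n⟫ 0 ≤ Real.exp (c * ‖v‖) * Real.exp ‖v‖ :=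
        mul_le_mul_of_nonneg_left (h1.trans h2) (Real.exp_pos _).le
      rwa [← Real.exp_add, show c * ‖v‖ + ‖v‖ = (c + 1) * ‖v‖ by ring] at h5
    have h5 : (0:ℝ) ≤ (2 * π) ^ (-(N:ℝ)/2) := by positivity
    have h6 := mul_le_mul_of_nonneg_left
      (mul_le_mul_of_nonneg_right h4 (Real.exp_pos (-‖v‖ ^ 2 / 2)).le) h5
    nlinarith [h6]

-- 1D integrals
lemma int_gauss_1d : ∫ x : ℝ, Real.exp (-x ^ 2 / 2) = Real.sqrt (2 * π) := by
  have h := integral_gaussian (1/2 : ℝ)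
  rw [show π / (1/2 : ℝ) = 2 * π by ring] at h
  rw [← h]
  congr 1 with x
  ring_nf

lemma int_pos_part_1d : ∫ x : ℝ, max x 0 * Real.exp (-x ^ 2 / 2) = 1 := by
  have hsupp : ∀ x ∉ Set.Ioi (0:ℝ), max x 0 * Real.exp (-x ^ 2 / 2) = 0 := by
    intro x hx
    simp only [Set.mem_Ioi, not_lt] at hx
    rw [max_eq_right hx, zero_mul]
  rw [← setIntegral_eq_integral_of_forall_compl_eq_zero hsupp]
  have hcong : ∫ x in Set.Ioi (0:ℝ), max x 0 * Real.exp (-x ^ 2 / 2)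
      = ∫ x in Set.Ioi (0:ℝ), x * Real.exp (-x ^ 2 / 2) := by
    apply setIntegral_congr_fun measurableSet_Ioi
    intro x hx
    simp only [max_eq_left (le_of_lt (Set.mem_Ioi.mp hx))]
  rw [hcong]
  have hint : IntegrableOn (fun x : ℝ => x * Real.exp (-x ^ 2 / 2)) (Set.Ioi 0) := by
    have := (integrable_mul_exp_neg_mul_sq (b := (1/2:ℝ)) (by norm_num)).integrableOn
      (s := Set.Ioi 0)
    apply this.congr_fun ?_ measurableSet_Ioi
    intro x _; ring_nf
  have hderiv : ∀ x ∈ Set.Ici (0:ℝ),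
      HasDerivAt (fun x : ℝ => -Real.exp (-x ^ 2 / 2)) (x * Real.exp (-x ^ 2 / 2)) x := by
    intro x _
    have h1 : HasDerivAt (fun x : ℝ => -x ^ 2 / 2) (-x) x := by
      have := ((hasDerivAt_pow 2 x).neg).div_const 2
      exact this.congr_deriv (by norm_num; ring)
    have := ((Real.hasDerivAt_exp (-x ^ 2 / 2)).comp x h1).neg
    exact this.congr_deriv (by ring)
  have htend : Filter.Tendsto (fun x : ℝ => -Real.exp (-x ^ 2 / 2)) Filter.atTop (nhds 0) := by
    have h1 : Filter.Tendsto (fun x : ℝ => -x ^ 2 / 2) Filter.atTop Filter.atBot := by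
      apply Filter.Tendsto.atBot_div_const (by norm_num : (0:ℝ) < 2)
      exact Filter.tendsto_neg_atTop_atBot.comp (Filter.tendsto_pow_atTop (n := 2) (by norm_num))
    have := (Real.tendsto_exp_atBot).comp h1
    simpa using this.neg
  rw [MeasureTheory.integral_Ioi_of_hasDerivAt_of_tendsto' hderiv hint htend]
  norm_num

lemma int_odd_1d : ∫ x : ℝ, x * Real.exp (-x ^ 2 / 2) = 0 := by
  have h := integral_neg_eq_self (fun x : ℝ => x * Real.exp (-x ^ 2 / 2)) volume
  simp only [neg_sq, neg_mul] at h
  have h2 := integral_neg (f := fun x : ℝ => x * Real.exp (-x ^ 2 / 2)) (μ := volume)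
  rw [h2] at h
  linarith

lemma euclid_integral_prod {N : ℕ} (f : Fin N → ℝ → ℝ) :
    ∫ x : EuclideanSpace ℝ (Fin N), ∏ i, f i (x i) = ∏ i, ∫ t : ℝ, f i t := by
  rw [← ((EuclideanSpace.volume_preserving_symm_measurableEquiv_toLp (Fin N)).symm).integral_comp'
    (fun x : EuclideanSpace ℝ (Fin N) => ∏ i, f i (x i))]
  have : ∀ y : Fin N → ℝ, (∏ i, f i (((MeasurableEquiv.toLp 2 (Fin N → ℝ)).symm.symm y) i))
      = ∏ i, f i (y i) := fun y => rfl
  simp_rw [this]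
  exact MeasureTheory.integral_fintype_prod_eq_prod f

lemma gaussM_prod {N : ℕ} (x : EuclideanSpace ℝ (Fin N)) :
    gaussM x = ∏ i, ((2 * π) ^ (-(1:ℝ)/2) * Real.exp (-(x i) ^ 2 / 2)) := by
  have hnx : ‖x‖ ^ 2 = ∑ i, (x i) ^ 2 := by
    rw [EuclideanSpace.norm_eq, Real.sq_sqrt (by positivity)]
    simp [sq_abs]
  unfold gaussM
  rw [Finset.prod_mul_distrib, Finset.prod_const, ← Real.exp_sum, Finset.card_univ,
    Fintype.card_fin]
  congr 1
  · rw [← Real.rpow_natCast ((2 * π) ^ (-(1:ℝ)/2)) N, ← Real.rpow_mul (by positivity)]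
    congr 1; ring
  · rw [hnx]; rw [← Finset.sum_div, ← Finset.sum_neg_distrib]

lemma N_pos {N : ℕ} (n : EuclideanSpace ℝ (Fin N)) (hn : ‖n‖ = 1) : 0 < N := by
  rcases Nat.eq_zero_or_pos N with h | h
  · exfalso
    subst h
    have : n = 0 := by ext i; exact i.elim0
    rw [this, norm_zero] at hn
    norm_num at hn
  · exact h

lemma rpow_half_inv : (2 * π) ^ (-(1:ℝ)/2) = (Real.sqrt (2 * π))⁻¹ := by
  rw [Real.sqrt_eq_rpow, show -(1:ℝ)/2 = -(1/2 : ℝ) by norm_num,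
    Real.rpow_neg (by positivity)]

lemma int_phi_1d : ∫ t : ℝ, (2 * π) ^ (-(1:ℝ)/2) * Real.exp (-t ^ 2 / 2) = 1 := by
  rw [integral_const_mul, int_gauss_1d, rpow_half_inv,
    inv_mul_cancel₀ (by positivity : Real.sqrt (2 * π) ≠ 0)]

lemma int_w {N : ℕ} (n : EuclideanSpace ℝ (Fin N)) (hn : ‖n‖ = 1) :
    ∫ v, max ⟪v, n⟫ 0 * gaussM v = (Real.sqrt (2 * π))⁻¹ := by
  have hN : 0 < N := N_pos n hn
  set i0 : Fin N := ⟨0, hN⟩ with hi0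
  have horth : Orthonormal ℝ (({i0} : Set (Fin N)).restrict (fun _ : Fin N => n)) := by
    constructor
    · intro i; exact hn
    · intro i j hij
      exact absurd (Subtype.ext (i.2.trans j.2.symm)) hij
  obtain ⟨b, hb⟩ := horth.exists_orthonormalBasis_extension_of_card_eq
    (by simp [finrank_euclideanSpace])
  have hb0 : b i0 = n := hb i0 rfl
  have hmp := b.measurePreserving_repr_symm
  rw [← hmp.integral_comp (b.repr.symm.toHomeomorph.measurableEmbedding)
    (fun v => max ⟪v, n⟫ 0 * gaussM v)]
  have hinner : ∀ x : EuclideanSpace ℝ (Fin N), ⟪b.repr.symm x, n⟫ = x i0 := by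
    intro x
    rw [real_inner_comm, ← hb0, ← OrthonormalBasis.repr_apply_apply,
      LinearIsometryEquiv.apply_symm_apply]
  have hnorm : ∀ x : EuclideanSpace ℝ (Fin N), gaussM (b.repr.symm x) = gaussM x := by
    intro x; unfold gaussM; rw [LinearIsometryEquiv.norm_map]
  simp_rw [hinner, hnorm]
  classical
  set φ : ℝ → ℝ := fun t => (2 * π) ^ (-(1:ℝ)/2) * Real.exp (-t ^ 2 / 2) with hφ
  set f : Fin N → ℝ → ℝ := fun i => if i = i0 then (fun t => max t 0 * φ t) else φ with hfdef
  have hprod : ∀ x : EuclideanSpace ℝ (Fin N), max (x i0) 0 * gaussM x = ∏ i, f i (x i) := by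
    intro x
    have h1 : ∀ i, f i (x i) = (if i = i0 then max (x i) 0 else 1) * φ (x i) := by
      intro i; by_cases h : i = i0 <;> simp [hfdef, h]
    rw [Finset.prod_congr rfl (fun i _ => h1 i), Finset.prod_mul_distrib]
    have h2 : (∏ i, (if i = i0 then max (x i) 0 else 1)) = max (x i0) 0 := by
      simp [Finset.prod_ite_eq]
    rw [h2, ← gaussM_prod]
  simp_rw [hprod]
  rw [euclid_integral_prod]
  rw [Finset.prod_eq_single i0 ?_ ?_]
  · simp only [hfdef, if_pos rfl]
    have : ∀ t : ℝ, max t 0 * φ t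
        = (2 * π) ^ (-(1:ℝ)/2) * (max t 0 * Real.exp (-t ^ 2 / 2)) := by
      intro t; rw [hφ]; ring
    simp_rw [this]
    rw [integral_const_mul, int_pos_part_1d, mul_one, rpow_half_inv]
  · intro i _ hi
    simp only [hfdef, if_neg hi]
    exact int_phi_1d
  · intro h; exact absurd (Finset.mem_univ i0) h

lemma int_uvw {N : ℕ} (n u : EuclideanSpace ℝ (Fin N)) (hn : ‖n‖ = 1)
    (hu : ⟪u, n⟫ = 0) :
    ∫ v, ⟪u, v⟫ * (max ⟪v, n⟫ 0 * gaussM v) = 0 := by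
  rcases eq_or_ne u 0 with hu0 | hu0
  · simp [hu0]
  have hnu : ‖u‖ ≠ 0 := norm_ne_zero_iff.mpr hu0
  set w : EuclideanSpace ℝ (Fin N) := ‖u‖⁻¹ • u with hwdef
  have hw : ‖w‖ = 1 := by
    rw [hwdef, norm_smul, norm_inv, norm_norm, inv_mul_cancel₀ hnu]
  have hwn : ⟪w, n⟫ = 0 := by
    rw [hwdef, real_inner_smul_left, hu, mul_zero]
  have hnw : ⟪n, w⟫ = 0 := by rw [real_inner_comm]; exact hwn
  have horth2 : Orthonormal ℝ ![n, w] := by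
    constructor
    · intro i; fin_cases i <;> simp [hn, hw]
    · intro i j hij
      fin_cases i <;> fin_cases j <;>
        simp_all [hnw, hwn]
  have hN2 : 2 ≤ N := by
    have := horth2.linearIndependent.fintype_card_le_finrank
    simpa [finrank_euclideanSpace] using this
  set i0 : Fin N := ⟨0, by omega⟩ with hi0
  set i1 : Fin N := ⟨1, by omega⟩ with hi1
  have hne : i0 ≠ i1 := by simp [hi0, hi1, Fin.ext_iff]
  classical
  set vf : Fin N → EuclideanSpace ℝ (Fin N) := fun i => if i = i0 then n else w with hvf
  have hvf0 : vf i0 = n := if_pos rfl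
  have hvf1 : vf i1 = w := if_neg (Ne.symm hne)
  have horth : Orthonormal ℝ (({i0, i1} : Set (Fin N)).restrict vf) := by
    constructor
    · rintro ⟨i, hi⟩
      rcases hi with h | h
      · subst h; show ‖vf i0‖ = 1; rw [hvf0, hn]
      · simp only [Set.mem_singleton_iff] at h
        subst h; show ‖vf i1‖ = 1; rw [hvf1, hw]
    · rintro ⟨i, hi⟩ ⟨j, hj⟩ hij
      have hij' : i ≠ j := fun h => hij (Subtype.ext h)
      rcases hi with hi | hi <;> rcases hj with hj | hj <;>
          (try simp only [Set.mem_singleton_iff] at hi hj)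
      · exact absurd (hi.trans hj.symm) hij'
      · subst hi; subst hj; show (⟪vf i0, vf i1⟫ = 0); rw [hvf0, hvf1]; exact hnw
      · subst hi; subst hj; show (⟪vf i1, vf i0⟫ = 0); rw [hvf0, hvf1]; exact hwn
      · exact absurd (hi.trans hj.symm) hij'
  obtain ⟨b, hb⟩ := horth.exists_orthonormalBasis_extension_of_card_eq
    (by simp [finrank_euclideanSpace])
  have hb0 : b i0 = n := by
    have := hb i0 (by simp)
    simpa [hvf] using this
  have hb1 : b i1 = w := by
    have := hb i1 (by simp)
    simpa [hvf, if_neg hne.symm, Ne.symm hne] using this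
  have hmp := b.measurePreserving_repr_symm
  rw [← hmp.integral_comp (b.repr.symm.toHomeomorph.measurableEmbedding)
    (fun v => ⟪u, v⟫ * (max ⟪v, n⟫ 0 * gaussM v))]
  have hinner : ∀ x : EuclideanSpace ℝ (Fin N), ⟪b.repr.symm x, n⟫ = x i0 := by
    intro x
    rw [real_inner_comm, ← hb0, ← OrthonormalBasis.repr_apply_apply,
      LinearIsometryEquiv.apply_symm_apply]
  have hinneru : ∀ x : EuclideanSpace ℝ (Fin N), ⟪u, b.repr.symm x⟫ = ‖u‖ * x i1 := by
    intro x
    have h5 : ‖u‖ * ⟪w, b.repr.symm x⟫ = ⟪u, b.repr.symm x⟫ := by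
      rw [hwdef, real_inner_smul_left]
      field_simp
    rw [← h5, ← hb1, ← OrthonormalBasis.repr_apply_apply,
      LinearIsometryEquiv.apply_symm_apply]
  have hnorm : ∀ x : EuclideanSpace ℝ (Fin N), gaussM (b.repr.symm x) = gaussM x := by
    intro x; unfold gaussM; rw [LinearIsometryEquiv.norm_map]
  simp_rw [hinner, hinneru, hnorm]
  set φ : ℝ → ℝ := fun t => (2 * π) ^ (-(1:ℝ)/2) * Real.exp (-t ^ 2 / 2) with hφ
  set f : Fin N → ℝ → ℝ := fun i =>
    if i = i0 then (fun t => max t 0 * φ t)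
    else if i = i1 then (fun t => ‖u‖ * t * φ t) else φ with hfdef
  have hprod : ∀ x : EuclideanSpace ℝ (Fin N),
      ‖u‖ * x i1 * (max (x i0) 0 * gaussM x) = ∏ i, f i (x i) := by
    intro x
    have h1 : ∀ i, f i (x i) =
        (if i = i0 then max (x i) 0 else if i = i1 then ‖u‖ * x i else 1) * φ (x i) := by
      intro i
      by_cases h : i = i0
      · simp [hfdef, h]
      · by_cases h' : i = i1 <;> simp [hfdef, h, h', Ne.symm hne]
    rw [Finset.prod_congr rfl (fun i _ => h1 i), Finset.prod_mul_distrib]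
    have h2 : (∏ i, (if i = i0 then max (x i) 0 else if i = i1 then ‖u‖ * x i else 1))
        = max (x i0) 0 * (‖u‖ * x i1) := by
      rw [← Finset.prod_subset (Finset.subset_univ ({i0, i1} : Finset (Fin N)))
        (fun i _ hi => ?_)]
      · rw [Finset.prod_pair hne, if_pos rfl, if_neg (Ne.symm hne), if_pos rfl]
      · simp only [Finset.mem_insert, Finset.mem_singleton, not_or] at hi
        rw [if_neg hi.1, if_neg hi.2]
    rw [h2, ← gaussM_prod]
    ring
  simp_rw [hprod]
  rw [euclid_integral_prod]
  apply Finset.prod_eq_zero (Finset.mem_univ i1)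
  have hf1 : f i1 = fun t => ‖u‖ * t * φ t := by
    rw [hfdef]
    simp [Ne.symm hne]
  rw [hf1]
  have : ∀ t : ℝ, ‖u‖ * t * φ t
      = (‖u‖ * (2 * π) ^ (-(1:ℝ)/2)) * (t * Real.exp (-t ^ 2 / 2)) := by
    intro t; rw [hφ]; ring
  simp_rw [this]
  rw [integral_const_mul, int_odd_1d, mul_zero]
/-- Pointwise control of the boundary term by the Darrozes-Guiraud information:
for a unit vector `n`, a tangential vector `u`, `0 < ε ≤ 1` and `1 + εg ≥ 0`,
`∫ (u·v)(v·n)₊ g M dv ≤ (1/(2ε²))·(1/√(2π))(Λ_n(h(εg)) − h(εΛ_n(g))) + C(u)·Λ_n(1+εg)`,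
where `C(u) = ½ ∫ (e^{2|u||v|} − 2|u||v| − 1)(v·n)₊ M dv`. -/
theorem boundary_term_control {N : ℕ} (n u : EuclideanSpace ℝ (Fin N))
    (hn : ‖n‖ = 1) (hu : ⟪u, n⟫ = 0)
    (ε : ℝ) (hε : 0 < ε) (hε1 : ε ≤ 1)
    (g : EuclideanSpace ℝ (Fin N) → ℝ) (hgmeas : Measurable g)
    (hpos : ∀ᵐ v : EuclideanSpace ℝ (Fin N), 0 ≤ 1 + ε * g v)
    (hg_int : Integrable fun v => g v * max ⟪v, n⟫ 0 * gaussM v)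
    (hhg_int : Integrable fun v => entH (ε * g v) * max ⟪v, n⟫ 0 * gaussM v)
    (hexp_int : Integrable fun v =>
      Real.exp (2 * ‖u‖ * ‖v‖) * (1 + ε * g v) * max ⟪v, n⟫ 0 * gaussM v) :
    (∫ v, ⟪u, v⟫ * max ⟪v, n⟫ 0 * g v * gaussM v)
      ≤ (1 / (2 * ε ^ 2)) *
          ((1 / Real.sqrt (2 * π)) * (Lam n (fun v => entH (ε * g v)) - entH (ε * Lam n g)))
        + ((1 : ℝ) / 2 *
            ∫ v, (Real.exp (2 * ‖u‖ * ‖v‖) - 2 * ‖u‖ * ‖v‖ - 1) * max ⟪v, n⟫ 0 * gaussM v) *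
          Lam n (fun v => 1 + ε * g v) := by
  classical
  have hSpos : (0:ℝ) < Real.sqrt (2 * π) := Real.sqrt_pos.mpr (by positivity)
  have hSne : Real.sqrt (2 * π) ≠ 0 := ne_of_gt hSpos
  have hεne : ε ≠ 0 := ne_of_gt hε
  have hw_nonneg : ∀ v : EuclideanSpace ℝ (Fin N), 0 ≤ max ⟪v, n⟫ 0 * gaussM v :=
    fun v => mul_nonneg (le_max_right _ _) (gaussM_pos v).le
  have hw_cont : Continuous (fun v : EuclideanSpace ℝ (Fin N) => max ⟪v, n⟫ 0 * gaussM v) :=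
    ((continuous_id.inner continuous_const).max continuous_const).mul gaussM_cont
  have hinner_cont : Continuous (fun v : EuclideanSpace ℝ (Fin N) => (⟪u, v⟫ : ℝ)) :=
    continuous_const.inner continuous_id
  have hexpv : ∀ v : EuclideanSpace ℝ (Fin N), ‖v‖ ≤ Real.exp ‖v‖ := by
    intro v; nlinarith [Real.add_one_le_exp ‖v‖]
  -- integrability of the building blocks
  have iw : Integrable (fun v : EuclideanSpace ℝ (Fin N) => max ⟪v, n⟫ 0 * gaussM v) := by
    simpa using integrable_dom n hn 0
  have iexp1 : Integrable (fun v : EuclideanSpace ℝ (Fin N) =>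
      Real.exp ‖v‖ * (max ⟪v, n⟫ 0 * gaussM v)) := by
    simpa using integrable_dom n hn 1
  have iexpw : Integrable (fun v : EuclideanSpace ℝ (Fin N) =>
      Real.exp (2 * ‖u‖ * ‖v‖) * (max ⟪v, n⟫ 0 * gaussM v)) :=
    integrable_dom n hn (2 * ‖u‖)
  have innw : Integrable (fun v : EuclideanSpace ℝ (Fin N) =>
      ⟪u, v⟫ * (max ⟪v, n⟫ 0 * gaussM v)) := by
    apply (iexp1.const_mul ‖u‖).mono' (hinner_cont.mul hw_cont).aestronglyMeasurable
    filter_upwards with v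
    rw [Real.norm_eq_abs, Pi.mul_apply, abs_mul, abs_of_nonneg (hw_nonneg v)]
    have h1 : |⟪u, v⟫| ≤ ‖u‖ * ‖v‖ := abs_real_inner_le_norm u v
    have h3 := hw_nonneg v
    nlinarith [mul_le_mul_of_nonneg_right h1 h3,
      mul_le_mul_of_nonneg_right
        (mul_le_mul_of_nonneg_left (hexpv v) (norm_nonneg u)) h3]
  have inrmw : Integrable (fun v : EuclideanSpace ℝ (Fin N) =>
      ‖v‖ * (max ⟪v, n⟫ 0 * gaussM v)) := by
    apply iexp1.mono' (continuous_norm.mul hw_cont).aestronglyMeasurable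
    filter_upwards with v
    rw [Real.norm_eq_abs, Pi.mul_apply, abs_mul, abs_of_nonneg (hw_nonneg v),
      abs_of_nonneg (norm_nonneg v)]
    exact mul_le_mul_of_nonneg_right (hexpv v) (hw_nonneg v)
  have ig : Integrable (fun v : EuclideanSpace ℝ (Fin N) =>
      g v * (max ⟪v, n⟫ 0 * gaussM v)) := by
    have h := hg_int; simp_rw [mul_assoc] at h; exact h
  have ientH : Integrable (fun v : EuclideanSpace ℝ (Fin N) =>
      entH (ε * g v) * (max ⟪v, n⟫ 0 * gaussM v)) := by
    have h := hhg_int; simp_rw [mul_assoc] at h; exact h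
  have iF : Integrable (fun v : EuclideanSpace ℝ (Fin N) =>
      (1 + ε * g v) * (max ⟪v, n⟫ 0 * gaussM v)) := by
    rw [show (fun v : EuclideanSpace ℝ (Fin N) =>
        (1 + ε * g v) * (max ⟪v, n⟫ 0 * gaussM v))
      = fun v => max ⟪v, n⟫ 0 * gaussM v + ε * (g v * (max ⟪v, n⟫ 0 * gaussM v)) from
        funext fun v => by ring]
    exact iw.add (ig.const_mul ε)
  have iexpF : Integrable (fun v : EuclideanSpace ℝ (Fin N) =>
      Real.exp (2 * ‖u‖ * ‖v‖) * ((1 + ε * g v) * (max ⟪v, n⟫ 0 * gaussM v))) := by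
    have h := hexp_int
    rw [show (fun v : EuclideanSpace ℝ (Fin N) =>
        Real.exp (2 * ‖u‖ * ‖v‖) * (1 + ε * g v) * max ⟪v, n⟫ 0 * gaussM v)
      = fun v => Real.exp (2 * ‖u‖ * ‖v‖) * ((1 + ε * g v) * (max ⟪v, n⟫ 0 * gaussM v)) from
        funext fun v => by ring] at h
    exact h
  have hFmeas : Measurable (fun v : EuclideanSpace ℝ (Fin N) => 1 + ε * g v) :=
    measurable_const.add (hgmeas.const_mul ε)
  have iuv1 : Integrable (fun v : EuclideanSpace ℝ (Fin N) =>
      ⟪u, v⟫ * ((1 + ε * g v) * (max ⟪v, n⟫ 0 * gaussM v))) := by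
    apply iexpF.mono'
      (hinner_cont.measurable.mul (hFmeas.mul hw_cont.measurable)).aestronglyMeasurable
    filter_upwards [hpos] with v hFv
    have hFw : 0 ≤ (1 + ε * g v) * (max ⟪v, n⟫ 0 * gaussM v) :=
      mul_nonneg hFv (hw_nonneg v)
    rw [Real.norm_eq_abs, Pi.mul_apply, abs_mul, Pi.mul_apply, abs_of_nonneg hFw]
    have h1 : |⟪u, v⟫| ≤ ‖u‖ * ‖v‖ := abs_real_inner_le_norm u v
    have h2 : ‖u‖ * ‖v‖ ≤ Real.exp (2 * ‖u‖ * ‖v‖) := by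
      nlinarith [Real.add_one_le_exp (2 * ‖u‖ * ‖v‖),
        mul_nonneg (norm_nonneg u) (norm_nonneg v)]
    exact mul_le_mul_of_nonneg_right (h1.trans h2) hFw
  have iug : Integrable (fun v : EuclideanSpace ℝ (Fin N) =>
      ⟪u, v⟫ * (g v * (max ⟪v, n⟫ 0 * gaussM v))) := by
    rw [show (fun v : EuclideanSpace ℝ (Fin N) =>
        ⟪u, v⟫ * (g v * (max ⟪v, n⟫ 0 * gaussM v)))
      = fun v => ε⁻¹ * (⟪u, v⟫ * ((1 + ε * g v) * (max ⟪v, n⟫ 0 * gaussM v))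
          - ⟪u, v⟫ * (max ⟪v, n⟫ 0 * gaussM v)) from
        funext fun v => by field_simp; ring]
    exact (iuv1.sub innw).const_mul ε⁻¹
  have ipsi : Integrable (fun v : EuclideanSpace ℝ (Fin N) =>
      (Real.exp (2 * ‖u‖ * ‖v‖) - 2 * ‖u‖ * ‖v‖ - 1) * (max ⟪v, n⟫ 0 * gaussM v)) := by
    rw [show (fun v : EuclideanSpace ℝ (Fin N) =>
        (Real.exp (2 * ‖u‖ * ‖v‖) - 2 * ‖u‖ * ‖v‖ - 1) * (max ⟪v, n⟫ 0 * gaussM v))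
      = fun v => Real.exp (2 * ‖u‖ * ‖v‖) * (max ⟪v, n⟫ 0 * gaussM v)
          - (2 * ‖u‖) * (‖v‖ * (max ⟪v, n⟫ 0 * gaussM v))
          - max ⟪v, n⟫ 0 * gaussM v from funext fun v => by ring]
    exact (iexpw.sub (inrmw.const_mul (2 * ‖u‖))).sub iw
  -- the two exact Gaussian integrals
  have hK : ∫ v, max ⟪v, n⟫ 0 * gaussM v = (Real.sqrt (2 * π))⁻¹ := int_w n hn
  have hZ : ∫ v, ⟪u, v⟫ * (max ⟪v, n⟫ 0 * gaussM v) = 0 := int_uvw n u hn hu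
  -- notation
  set S := Real.sqrt (2 * π) with hSdef
  set T0 := ∫ v, (1 + ε * g v) * (max ⟪v, n⟫ 0 * gaussM v) with hT0def
  have hLamF : Lam n (fun v => 1 + ε * g v) = S * T0 := by
    unfold Lam; rw [hT0def]
    congr 1
    simp_rw [mul_assoc]
  have hLamg : Lam n g = S * ∫ v, g v * (max ⟪v, n⟫ 0 * gaussM v) := by
    unfold Lam
    congr 1
    simp_rw [mul_assoc]
  have hLamH : Lam n (fun v => entH (ε * g v))
      = S * ∫ v, entH (ε * g v) * (max ⟪v, n⟫ 0 * gaussM v) := by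
    unfold Lam
    congr 1
    simp_rw [mul_assoc]
  have hT0split : T0 = S⁻¹ + ε * ∫ v, g v * (max ⟪v, n⟫ 0 * gaussM v) := by
    rw [hT0def, show (fun v : EuclideanSpace ℝ (Fin N) =>
        (1 + ε * g v) * (max ⟪v, n⟫ 0 * gaussM v))
      = fun v => max ⟪v, n⟫ 0 * gaussM v + ε * (g v * (max ⟪v, n⟫ 0 * gaussM v)) from
        funext fun v => by ring]
    rw [integral_add iw (ig.const_mul ε), integral_const_mul, hK]
  have hεLamg : ε * Lam n g = S * T0 - 1 := by
    rw [hLamg, hT0split]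
    field_simp
    ring
  have hT0nonneg : 0 ≤ T0 := by
    rw [hT0def]
    apply integral_nonneg_of_ae
    filter_upwards [hpos] with v hv
    exact mul_nonneg hv (hw_nonneg v)
  rcases hT0nonneg.eq_or_lt with hT00 | hT0pos
  · -- degenerate case : T0 = 0
    have hae : (fun v : EuclideanSpace ℝ (Fin N) =>
        (1 + ε * g v) * (max ⟪v, n⟫ 0 * gaussM v)) =ᵐ[volume] 0 := by
      rw [← integral_eq_zero_iff_of_nonneg_ae ?_ iF]
      · exact hT00.symm
      · filter_upwards [hpos] with v hv
        exact mul_nonneg hv (hw_nonneg v)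
    have hA : (∫ v, ⟪u, v⟫ * max ⟪v, n⟫ 0 * g v * gaussM v) = 0 := by
      rw [show (fun v : EuclideanSpace ℝ (Fin N) =>
          ⟪u, v⟫ * max ⟪v, n⟫ 0 * g v * gaussM v)
        = fun v => ε⁻¹ * (⟪u, v⟫ * ((1 + ε * g v) * (max ⟪v, n⟫ 0 * gaussM v))
            - ⟪u, v⟫ * (max ⟪v, n⟫ 0 * gaussM v)) from
          funext fun v => by field_simp; ring]
      rw [integral_const_mul, integral_sub iuv1 innw, hZ]
      have h1 : ∫ v, ⟪u, v⟫ * ((1 + ε * g v) * (max ⟪v, n⟫ 0 * gaussM v)) = 0 := by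
        apply integral_eq_zero_of_ae
        filter_upwards [hae] with v hv
        simp only [Pi.zero_apply] at hv ⊢
        rw [hv, mul_zero]
      rw [h1]
      simp
    have hH : (∫ v, entH (ε * g v) * (max ⟪v, n⟫ 0 * gaussM v)) = S⁻¹ := by
      rw [← hK]
      apply integral_congr_ae
      filter_upwards [hae, hpos] with v h1 h2
      simp only [Pi.zero_apply] at h1
      rcases mul_eq_zero.mp h1 with hF0 | hw0
      · have hg1 : ε * g v = -1 := by linarith
        rw [hg1]
        norm_num [entH]
      · rw [hw0]; simp
    have hLent : Lam n (fun v => entH (ε * g v)) = 1 := by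
      rw [hLamH, hH, mul_inv_cancel₀ hSne]
    have hεL : ε * Lam n g = -1 := by rw [hεLamg, ← hT00]; ring
    have hLF : Lam n (fun v => 1 + ε * g v) = 0 := by rw [hLamF, ← hT00]; ring
    rw [hA, hLent, hεL, hLF]
    norm_num [entH]
  · -- main case : T0 > 0
    have htpos : 0 < S * T0 := mul_pos hSpos hT0pos
    set t := S * T0 with htdef
    -- pointwise Young-type bound
    have hpoint : ∀ᵐ v : EuclideanSpace ℝ (Fin N),
        2 * ε * ⟪u, v⟫ * ((1 + ε * g v) * (max ⟪v, n⟫ 0 * gaussM v)) ≤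
        (entH (ε * g v) - 1) * (max ⟪v, n⟫ 0 * gaussM v)
          - Real.log t * ((1 + ε * g v) * (max ⟪v, n⟫ 0 * gaussM v))
          + ε ^ 2 * t * ((Real.exp (2 * ‖u‖ * ‖v‖) - 2 * ‖u‖ * ‖v‖ - 1)
              * (max ⟪v, n⟫ 0 * gaussM v))
          + 2 * ε * t * (⟪u, v⟫ * (max ⟪v, n⟫ 0 * gaussM v))
          + t * (max ⟪v, n⟫ 0 * gaussM v) := by
      filter_upwards [hpos] with v hF
      have hyoung := young hF htpos (2 * ε * ⟪u, v⟫)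
      have hpsi : Real.exp (2 * ε * ⟪u, v⟫) - 2 * ε * ⟪u, v⟫ - 1
          ≤ ε ^ 2 * (Real.exp (2 * ‖u‖ * ‖v‖) - 2 * ‖u‖ * ‖v‖ - 1) := by
        have h1 : |2 * ε * ⟪u, v⟫| ≤ ε * (2 * ‖u‖ * ‖v‖) := by
          rw [abs_mul, abs_of_nonneg (by positivity : (0:ℝ) ≤ 2 * ε)]
          calc 2 * ε * |⟪u, v⟫| ≤ 2 * ε * (‖u‖ * ‖v‖) :=
                mul_le_mul_of_nonneg_left (abs_real_inner_le_norm u v) (by positivity)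
            _ = ε * (2 * ‖u‖ * ‖v‖) := by ring
        calc Real.exp (2 * ε * ⟪u, v⟫) - 2 * ε * ⟪u, v⟫ - 1
            ≤ Real.exp |2 * ε * ⟪u, v⟫| - |2 * ε * ⟪u, v⟫| - 1 := psi_abs _
          _ ≤ Real.exp (ε * (2 * ‖u‖ * ‖v‖)) - ε * (2 * ‖u‖ * ‖v‖) - 1 :=
              psi_mono (abs_nonneg _) h1
          _ ≤ ε ^ 2 * (Real.exp (2 * ‖u‖ * ‖v‖) - 2 * ‖u‖ * ‖v‖ - 1) :=
              psi_scale hε.le hε1 (by positivity)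
      have hent : (1 + ε * g v) * Real.log (1 + ε * g v) - (1 + ε * g v)
          = entH (ε * g v) - 1 := by
        simp only [entH]; ring
      have hstep : (1 + ε * g v) * (2 * ε * ⟪u, v⟫)
          ≤ entH (ε * g v) - 1 - (1 + ε * g v) * Real.log t
            + ε ^ 2 * t * (Real.exp (2 * ‖u‖ * ‖v‖) - 2 * ‖u‖ * ‖v‖ - 1)
            + t * (2 * ε * ⟪u, v⟫) + t := by
        linarith [hyoung, mul_le_mul_of_nonneg_left hpsi htpos.le, hent]
      have hw0 := hw_nonneg v
      calc 2 * ε * ⟪u, v⟫ * ((1 + ε * g v) * (max ⟪v, n⟫ 0 * gaussM v))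
          = ((1 + ε * g v) * (2 * ε * ⟪u, v⟫)) * (max ⟪v, n⟫ 0 * gaussM v) := by ring
        _ ≤ (entH (ε * g v) - 1 - (1 + ε * g v) * Real.log t
              + ε ^ 2 * t * (Real.exp (2 * ‖u‖ * ‖v‖) - 2 * ‖u‖ * ‖v‖ - 1)
              + t * (2 * ε * ⟪u, v⟫) + t) * (max ⟪v, n⟫ 0 * gaussM v) :=
            mul_le_mul_of_nonneg_right hstep hw0
        _ = (entH (ε * g v) - 1) * (max ⟪v, n⟫ 0 * gaussM v)
              - Real.log t * ((1 + ε * g v) * (max ⟪v, n⟫ 0 * gaussM v))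
              + ε ^ 2 * t * ((Real.exp (2 * ‖u‖ * ‖v‖) - 2 * ‖u‖ * ‖v‖ - 1)
                  * (max ⟪v, n⟫ 0 * gaussM v))
              + 2 * ε * t * (⟪u, v⟫ * (max ⟪v, n⟫ 0 * gaussM v))
              + t * (max ⟪v, n⟫ 0 * gaussM v) := by ring
    -- integrate the pointwise bound
    have iA : Integrable (fun v : EuclideanSpace ℝ (Fin N) =>
        (entH (ε * g v) - 1) * (max ⟪v, n⟫ 0 * gaussM v)) := by
      rw [show (fun v : EuclideanSpace ℝ (Fin N) =>
          (entH (ε * g v) - 1) * (max ⟪v, n⟫ 0 * gaussM v))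
        = fun v => entH (ε * g v) * (max ⟪v, n⟫ 0 * gaussM v)
            - max ⟪v, n⟫ 0 * gaussM v from funext fun v => by ring]
      exact ientH.sub iw
    have iuvF : Integrable (fun v : EuclideanSpace ℝ (Fin N) =>
        2 * ε * ⟪u, v⟫ * ((1 + ε * g v) * (max ⟪v, n⟫ 0 * gaussM v))) := by
      rw [show (fun v : EuclideanSpace ℝ (Fin N) =>
          2 * ε * ⟪u, v⟫ * ((1 + ε * g v) * (max ⟪v, n⟫ 0 * gaussM v)))
        = fun v => (2 * ε) * (⟪u, v⟫ * ((1 + ε * g v) * (max ⟪v, n⟫ 0 * gaussM v))) from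
          funext fun v => by ring]
      exact iuv1.const_mul (2 * ε)
    have iB : Integrable (fun v : EuclideanSpace ℝ (Fin N) =>
        Real.log t * ((1 + ε * g v) * (max ⟪v, n⟫ 0 * gaussM v))) :=
      iF.const_mul (Real.log t)
    have iC : Integrable (fun v : EuclideanSpace ℝ (Fin N) =>
        ε ^ 2 * t * ((Real.exp (2 * ‖u‖ * ‖v‖) - 2 * ‖u‖ * ‖v‖ - 1)
          * (max ⟪v, n⟫ 0 * gaussM v))) :=
      ipsi.const_mul (ε ^ 2 * t)
    have iD : Integrable (fun v : EuclideanSpace ℝ (Fin N) =>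
        2 * ε * t * (⟪u, v⟫ * (max ⟪v, n⟫ 0 * gaussM v))) :=
      innw.const_mul (2 * ε * t)
    have iE : Integrable (fun v : EuclideanSpace ℝ (Fin N) =>
        t * (max ⟪v, n⟫ 0 * gaussM v)) := iw.const_mul t
    have iAB : Integrable (fun v : EuclideanSpace ℝ (Fin N) =>
        (entH (ε * g v) - 1) * (max ⟪v, n⟫ 0 * gaussM v)
          - Real.log t * ((1 + ε * g v) * (max ⟪v, n⟫ 0 * gaussM v))) := iA.sub iB
    have iABC : Integrable (fun v : EuclideanSpace ℝ (Fin N) =>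
        (entH (ε * g v) - 1) * (max ⟪v, n⟫ 0 * gaussM v)
          - Real.log t * ((1 + ε * g v) * (max ⟪v, n⟫ 0 * gaussM v))
          + ε ^ 2 * t * ((Real.exp (2 * ‖u‖ * ‖v‖) - 2 * ‖u‖ * ‖v‖ - 1)
              * (max ⟪v, n⟫ 0 * gaussM v))) := iAB.add iC
    have iABCD : Integrable (fun v : EuclideanSpace ℝ (Fin N) =>
        (entH (ε * g v) - 1) * (max ⟪v, n⟫ 0 * gaussM v)
          - Real.log t * ((1 + ε * g v) * (max ⟪v, n⟫ 0 * gaussM v))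
          + ε ^ 2 * t * ((Real.exp (2 * ‖u‖ * ‖v‖) - 2 * ‖u‖ * ‖v‖ - 1)
              * (max ⟪v, n⟫ 0 * gaussM v))
          + 2 * ε * t * (⟪u, v⟫ * (max ⟪v, n⟫ 0 * gaussM v))) := iABC.add iD
    have iRHS : Integrable (fun v : EuclideanSpace ℝ (Fin N) =>
        (entH (ε * g v) - 1) * (max ⟪v, n⟫ 0 * gaussM v)
          - Real.log t * ((1 + ε * g v) * (max ⟪v, n⟫ 0 * gaussM v))
          + ε ^ 2 * t * ((Real.exp (2 * ‖u‖ * ‖v‖) - 2 * ‖u‖ * ‖v‖ - 1)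
              * (max ⟪v, n⟫ 0 * gaussM v))
          + 2 * ε * t * (⟪u, v⟫ * (max ⟪v, n⟫ 0 * gaussM v))
          + t * (max ⟪v, n⟫ 0 * gaussM v)) := iABCD.add iE
    have key := integral_mono_ae iuvF iRHS hpoint
    -- compute both sides
    have hLHS : ∫ v, 2 * ε * ⟪u, v⟫ * ((1 + ε * g v) * (max ⟪v, n⟫ 0 * gaussM v))
        = 2 * ε ^ 2 * ∫ v, ⟪u, v⟫ * max ⟪v, n⟫ 0 * g v * gaussM v := by
      rw [show (fun v : EuclideanSpace ℝ (Fin N) =>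
          2 * ε * ⟪u, v⟫ * ((1 + ε * g v) * (max ⟪v, n⟫ 0 * gaussM v)))
        = fun v => (2 * ε) * (⟪u, v⟫ * (max ⟪v, n⟫ 0 * gaussM v))
            + (2 * ε ^ 2) * (⟪u, v⟫ * (g v * (max ⟪v, n⟫ 0 * gaussM v))) from
          funext fun v => by ring]
      rw [integral_add (innw.const_mul (2 * ε)) (iug.const_mul (2 * ε ^ 2)),
        integral_const_mul, integral_const_mul, hZ]
      rw [show (fun v : EuclideanSpace ℝ (Fin N) =>
          ⟪u, v⟫ * (g v * (max ⟪v, n⟫ 0 * gaussM v)))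
        = fun v => ⟪u, v⟫ * max ⟪v, n⟫ 0 * g v * gaussM v from
          funext fun v => by ring]
      ring
    have hRHS : ∫ v, ((entH (ε * g v) - 1) * (max ⟪v, n⟫ 0 * gaussM v)
          - Real.log t * ((1 + ε * g v) * (max ⟪v, n⟫ 0 * gaussM v))
          + ε ^ 2 * t * ((Real.exp (2 * ‖u‖ * ‖v‖) - 2 * ‖u‖ * ‖v‖ - 1)
              * (max ⟪v, n⟫ 0 * gaussM v))
          + 2 * ε * t * (⟪u, v⟫ * (max ⟪v, n⟫ 0 * gaussM v))
          + t * (max ⟪v, n⟫ 0 * gaussM v))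
        = ((∫ v, entH (ε * g v) * (max ⟪v, n⟫ 0 * gaussM v)) - S⁻¹)
          - Real.log t * T0
          + ε ^ 2 * t * (∫ v, (Real.exp (2 * ‖u‖ * ‖v‖) - 2 * ‖u‖ * ‖v‖ - 1)
              * (max ⟪v, n⟫ 0 * gaussM v))
          + t * S⁻¹ := by
      rw [integral_add iABCD iE, integral_add iABC iD, integral_add iAB iC,
        integral_sub iA iB]
      rw [show (fun v : EuclideanSpace ℝ (Fin N) =>
          (entH (ε * g v) - 1) * (max ⟪v, n⟫ 0 * gaussM v))
        = fun v => entH (ε * g v) * (max ⟪v, n⟫ 0 * gaussM v)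
            - max ⟪v, n⟫ 0 * gaussM v from funext fun v => by ring]
      rw [integral_sub ientH iw, hK]
      rw [integral_const_mul, integral_const_mul, integral_const_mul, integral_const_mul,
        hZ, hK, ← hT0def]
      ring
    rw [hLHS, hRHS] at key
    -- final algebra
    have hΨ : (∫ v, (Real.exp (2 * ‖u‖ * ‖v‖) - 2 * ‖u‖ * ‖v‖ - 1)
          * max ⟪v, n⟫ 0 * gaussM v)
        = ∫ v, (Real.exp (2 * ‖u‖ * ‖v‖) - 2 * ‖u‖ * ‖v‖ - 1)
            * (max ⟪v, n⟫ 0 * gaussM v) := by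
      simp_rw [mul_assoc]
    have hentt : entH (ε * Lam n g) = t * Real.log t - t + 1 := by
      rw [hεLamg]
      simp only [entH]
      rw [show (1:ℝ) + (t - 1) = t by ring]
      ring
    rw [hΨ, hLamF, hLamH, hentt]
    set H := ∫ v, entH (ε * g v) * (max ⟪v, n⟫ 0 * gaussM v) with hHdef
    set Ψ := ∫ v, (Real.exp (2 * ‖u‖ * ‖v‖) - 2 * ‖u‖ * ‖v‖ - 1)
        * (max ⟪v, n⟫ 0 * gaussM v) with hΨdef
    set A := ∫ v, ⟪u, v⟫ * max ⟪v, n⟫ 0 * g v * gaussM v with hAdef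
    have hgoal : 1 / (2 * ε ^ 2) * (1 / S * (S * H - (t * Real.log t - t + 1)))
          + 1 / 2 * Ψ * t
        = (H - S⁻¹ - Real.log t * T0 + ε ^ 2 * t * Ψ + t * S⁻¹) / (2 * ε ^ 2) := by
      have hT0t : T0 = t / S := by rw [htdef]; field_simp
      rw [hT0t]
      field_simp
      ring
    rw [hgoal, le_div_iff₀ (by positivity : (0:ℝ) < 2 * ε ^ 2)]
    linarith [key]
end
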